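/- Finite-branching characterization of the viability kernel (König-type lemma): if U is a nonempty finite type, then a state x belongs to V if and only if for every K : ℕ there exists a control sequence u : ℕ → U with l (traj x u k) ≥ 0 for all k ≤ K. That is, the viability kernel equals the intersection over all K of the K-step viable sets. -/

import Mathlib

def traj {X U : Type*} (f : X → U → X) (x : X) (u : ℕ → U) : ℕ → X
  | 0 => x
  | k + 1 => f (traj f x u k) (u k)

def viab {X U : Type*} (f : X → U → X) (l : X → ℝ) : Set X :=
  {x | ∃ u : ℕ → U, ∀ k : ℕ, l (traj f x u k) ≥ 0}

/-- Auxiliary: finite-horizon viability. -/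
def vGood {X U : Type*} (f : X → U → X) (l : X → ℝ) (x : X) : Prop :=
  ∀ K : ℕ, ∃ u : ℕ → U, ∀ k ≤ K, l (traj f x u k) ≥ 0

lemma traj_shift {X U : Type*} (f : X → U → X) (x : X) (u : ℕ → U) (k : ℕ) :
    traj f x u (k + 1) = traj f (f x (u 0)) (fun n => u (n + 1)) k := by
  induction k with
  | zero => rfl
  | succ n ih =>
    show f (traj f x u (n + 1)) (u (n + 1)) = _
    rw [ih]; rfl

lemma vGood_l_nonneg {X U : Type*} (f : X → U → X) (l : X → ℝ) (x : X)
    (h : vGood f l x) : l x ≥ 0 := by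
  obtain ⟨u, hu⟩ := h 0
  exact hu 0 le_rfl

lemma vGood_step {X U : Type*} [Nonempty U] [Finite U] (f : X → U → X) (l : X → ℝ)
    (x : X) (h : vGood f l x) : ∃ a : U, vGood f l (f x a) := by
  by_contra hc
  push_neg at hc
  simp only [vGood, not_forall, not_exists] at hc
  have := Fintype.ofFinite U
  choose K hK using hc
  obtain ⟨M, hM⟩ := Finset.exists_le (Finset.univ.image K)
  have hKM : ∀ a : U, K a ≤ M := fun a => hM _ (Finset.mem_image_of_mem K (Finset.mem_univ a))
  obtain ⟨u, hu⟩ := h (M + 1)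
  have := hK (u 0) (fun n => u (n + 1))
  push_neg at this
  obtain ⟨k, hk, hbad⟩ := this
  rw [← traj_shift] at hbad
  exact absurd (hu (k + 1) (by have := hKM (u 0); omega)) (not_le.mpr hbad)

theorem viab_eq_iInter_finite_horizon {X U : Type*} [Nonempty U] [Finite U]
    (f : X → U → X) (l : X → ℝ) (x : X) :
    x ∈ viab f l ↔ ∀ K : ℕ, ∃ u : ℕ → U, ∀ k ≤ K, l (traj f x u k) ≥ 0 := by
  constructor
  · rintro ⟨u, hu⟩ K
    exact ⟨u, fun k _ => hu k⟩
  · intro h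
    -- build the sequence of good states
    let g : {y : X // vGood f l y} → {y : X // vGood f l y} := fun y =>
      ⟨f y.1 (vGood_step f l y.1 y.2).choose, (vGood_step f l y.1 y.2).choose_spec⟩
    let s : ℕ → {y : X // vGood f l y} := fun n => g^[n] ⟨x, h⟩
    let u : ℕ → U := fun n => (vGood_step f l (s n).1 (s n).2).choose
    have hs : ∀ n, traj f x u n = (s n).1 := by
      intro n
      induction n with
      | zero => rfl
      | succ n ih =>
        have : s (n + 1) = g (s n) := Function.iterate_succ_apply' g n _
        simp only [traj, ih, this, g]
        rfl
    exact ⟨u, fun k => by rw [hs k]; exact vGood_l_nonneg f l _ (s k).2⟩
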